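/- Let Σ₁ = diag(s₁²/12, 0) and let Σ₂ be the rank-one matrix (s₂²/12)·vvᵀ with v = (cos θ, sin θ). Then the squared Bures distance tr(Σ₁ + Σ₂ − 2(Σ₁^{1/2} Σ₂ Σ₁^{1/2})^{1/2}) equals s₁²/12 + s₂²/12 − (s₁ s₂/6)·cos θ, for θ ∈ [0, π/2]. -/

import Mathlib

open Classical Matrix Real

/-- The positive semidefinite square root of a real matrix (junk value `0` if not PSD). -/
noncomputable def psdSqrt {n : ℕ} (A : Matrix (Fin n) (Fin n) ℝ) : Matrix (Fin n) (Fin n) ℝ :=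
  if h : A.PosSemidef then
    (h.1.eigenvectorUnitary : Matrix (Fin n) (Fin n) ℝ) * diagonal (Real.sqrt ∘ h.1.eigenvalues) *
      (star h.1.eigenvectorUnitary : Matrix (Fin n) (Fin n) ℝ)
  else 0

section
open scoped MatrixOrder

lemma psdSqrt_diag2 (x : ℝ) (hx : 0 ≤ x) :
    psdSqrt (Matrix.diagonal ![x, 0]) = Matrix.diagonal ![Real.sqrt x, 0] := by
  have hpsd : (Matrix.diagonal ![x, 0]).PosSemidef := by
    refine Matrix.posSemidef_diagonal_iff.mpr fun i => ?_
    fin_cases i <;> simp [hx]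
  have hpsd' : (Matrix.diagonal ![Real.sqrt x, 0] : Matrix (Fin 2) (Fin 2) ℝ).PosSemidef := by
    refine Matrix.posSemidef_diagonal_iff.mpr fun i => ?_
    fin_cases i <;> simp [Real.sqrt_nonneg]
  rw [psdSqrt, dif_pos hpsd]
  have key : ((hpsd.1.eigenvectorUnitary : Matrix (Fin 2) (Fin 2) ℝ) *
      diagonal (Real.sqrt ∘ hpsd.1.eigenvalues) *
      (star hpsd.1.eigenvectorUnitary : Matrix (Fin 2) (Fin 2) ℝ))
      = cfc Real.sqrt (Matrix.diagonal ![x, 0]) := by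
    rw [hpsd.1.cfc_eq, IsHermitian.cfc, Unitary.conjStarAlgAut_apply]
    rfl
  rw [key, ← cfcₙ_eq_cfc (hf0 := Real.sqrt_zero), ← CFC.sqrt_eq_real_sqrt _ hpsd.nonneg]
  refine CFC.sqrt_unique ?_ hpsd'.nonneg
  ext i j
  fin_cases i <;> fin_cases j <;>
    simp [Matrix.mul_apply, Fin.sum_univ_two, Real.mul_self_sqrt hx]

end

/-- For `Σ₁ = diag(s₁²/12, 0)` and the rank-one matrix `Σ₂ = (s₂²/12)·vvᵀ` with
`v = (cos θ, sin θ)` and `θ ∈ [0, π/2]`, the squared Bures distance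
`tr(Σ₁ + Σ₂ − 2 (Σ₁^{1/2} Σ₂ Σ₁^{1/2})^{1/2})` equals
`s₁²/12 + s₂²/12 − (s₁ s₂ / 6) cos θ`. -/
theorem bures_sq_segments (s₁ s₂ θ : ℝ) (hs₁ : 0 < s₁) (hs₂ : 0 < s₂)
    (hθ : θ ∈ Set.Icc 0 (π / 2)) :
    (Matrix.diagonal ![s₁ ^ 2 / 12, 0] + (s₂ ^ 2 / 12) • vecMulVec ![cos θ, sin θ] ![cos θ, sin θ]
        - (2 : ℝ) • psdSqrt (psdSqrt (Matrix.diagonal ![s₁ ^ 2 / 12, 0]) *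
            ((s₂ ^ 2 / 12) • vecMulVec ![cos θ, sin θ] ![cos θ, sin θ]) *
            psdSqrt (Matrix.diagonal ![s₁ ^ 2 / 12, 0]))).trace
      = s₁ ^ 2 / 12 + s₂ ^ 2 / 12 - s₁ * s₂ / 6 * cos θ := by
  have hc : 0 ≤ cos θ := Real.cos_nonneg_of_mem_Icc
    ⟨by linarith [Real.pi_pos, hθ.1], hθ.2⟩
  have ha : (0:ℝ) ≤ s₁ ^ 2 / 12 := by positivity
  have h1 : psdSqrt (Matrix.diagonal ![s₁ ^ 2 / 12, 0])
      = Matrix.diagonal ![Real.sqrt (s₁ ^ 2 / 12), 0] := psdSqrt_diag2 _ ha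
  set r := Real.sqrt (s₁ ^ 2 / 12) with hr
  have hprod : Matrix.diagonal ![r, 0] *
      ((s₂ ^ 2 / 12) • vecMulVec ![cos θ, sin θ] ![cos θ, sin θ]) *
      Matrix.diagonal ![r, 0]
      = Matrix.diagonal ![r ^ 2 * (s₂ ^ 2 / 12) * cos θ ^ 2, 0] := by
    ext i j
    fin_cases i <;> fin_cases j <;>
      simp [Matrix.mul_apply, Fin.sum_univ_two, Matrix.vecMulVec_apply] <;> ring
  have hr2 : r ^ 2 = s₁ ^ 2 / 12 := Real.sq_sqrt ha
  have h2 : psdSqrt (Matrix.diagonal ![r ^ 2 * (s₂ ^ 2 / 12) * cos θ ^ 2, 0])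
      = Matrix.diagonal ![Real.sqrt (r ^ 2 * (s₂ ^ 2 / 12) * cos θ ^ 2), 0] :=
    psdSqrt_diag2 _ (by positivity)
  have hsq : Real.sqrt (r ^ 2 * (s₂ ^ 2 / 12) * cos θ ^ 2) = s₁ * s₂ / 12 * cos θ := by
    rw [hr2]
    rw [show s₁ ^ 2 / 12 * (s₂ ^ 2 / 12) * cos θ ^ 2 = (s₁ * s₂ / 12 * cos θ) ^ 2 by ring]
    exact Real.sqrt_sq (by positivity)
  rw [h1, hprod, h2, hsq]
  have hpyth := Real.sin_sq_add_cos_sq θ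
  simp [Matrix.trace, Matrix.diag, Fin.sum_univ_two, Matrix.vecMulVec_apply]
  nlinarith [Real.sin_sq_add_cos_sq θ]
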